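/- Let F(z) = ∑_{n=0}^∞ a_n z^n be an entire function with L := limsup_{n→∞} √n·|a_n|^{1/n} < ∞. Define F(z;τ) := (e^{−τD²/2}F)(z) for z ∈ ℂ and τ ∈ ℂ with |τ|·L² < e. Then F(z;τ) solves the backward heat equation: ∂F(z;τ)/∂τ = −(1/2)·∂²F(z;τ)/∂z² for every z ∈ ℂ and every τ with |τ|·L² < e. -/

import Mathlib

open Filter MeasureTheory Metric Set

noncomputable section

/-- The `n`-th Taylor coefficient `a_n = F^{(n)}(0)/n!` of an entire function `F`. -/
def taylorCoeff (F : ℂ → ℂ) (n : ℕ) : ℂ := iteratedDeriv n F 0 / n.factorial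

/-- The heat flow `e^{-τ D²/2}` applied to the monomial `z^n`:
`∑_{m=0}^{⌊n/2⌋} ((-1)^m n!/(m! 2^m (n-2m)!)) z^{n-2m} τ^m`. -/
def heatTerm (τ z : ℂ) (n : ℕ) : ℂ :=
  ∑ m ∈ Finset.range (n / 2 + 1),
    ((-1 : ℂ) ^ m * n.factorial / (m.factorial * 2 ^ m * (n - 2 * m).factorial)) *
      z ^ (n - 2 * m) * τ ^ m

/-- The heat flow `(e^{-τ D²/2} F)(z)`, defined via the double series applied to the Taylor
coefficients of `F`. -/
def heatFlow (F : ℂ → ℂ) (τ z : ℂ) : ℂ := ∑' n : ℕ, taylorCoeff F n * heatTerm τ z n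

/-- The sequence `√n · |a_n|^{1/n}` measuring the growth of the Taylor coefficients of `F`. -/
def coefGrowthSeq (F : ℂ → ℂ) (n : ℕ) : ℝ :=
  Real.sqrt n * ‖taylorCoeff F n‖ ^ ((n : ℝ)⁻¹)

/-- `L(F) = limsup_{n→∞} √n · |a_n|^{1/n}`. -/
def Lgrowth (F : ℂ → ℂ) : ℝ := Filter.limsup (coefGrowthSeq F) Filter.atTop

/-- coefficient of the heat term -/
def hC (n m : ℕ) : ℂ :=
  (-1 : ℂ) ^ m * n.factorial / (m.factorial * 2 ^ m * (n - 2 * m).factorial)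

lemma heatTerm_eq (τ z : ℂ) (n : ℕ) :
    heatTerm τ z n = ∑ m ∈ Finset.range (n / 2 + 1), hC n m * z ^ (n - 2 * m) * τ ^ m := rfl

/-- τ-derivative of heatTerm -/
def dtHT (τ z : ℂ) (n : ℕ) : ℂ :=
  ∑ m ∈ Finset.range (n / 2 + 1), hC n m * z ^ (n - 2 * m) * ((m : ℂ) * τ ^ (m - 1))

/-- z-derivative of heatTerm -/
def dzHT (τ z : ℂ) (n : ℕ) : ℂ :=
  ∑ m ∈ Finset.range (n / 2 + 1), (hC n m * ((n - 2 * m : ℕ) : ℂ)) * z ^ (n - 2 * m - 1) * τ ^ m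

/-- second z-derivative of heatTerm -/
def d2zHT (τ z : ℂ) (n : ℕ) : ℂ :=
  ∑ m ∈ Finset.range (n / 2 + 1),
    (hC n m * ((n - 2 * m : ℕ) : ℂ) * ((n - 2 * m - 1 : ℕ) : ℂ)) * z ^ (n - 2 * m - 2) * τ ^ m

lemma hasDerivAt_heatTerm_tau (z : ℂ) (n : ℕ) (τ : ℂ) :
    HasDerivAt (fun s => heatTerm s z n) (dtHT τ z n) τ := by
  simp only [heatTerm_eq]
  exact HasDerivAt.fun_sum fun m _ => (hasDerivAt_pow m τ).const_mul (hC n m * z ^ (n - 2 * m))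

lemma hasDerivAt_heatTerm_z (τ : ℂ) (n : ℕ) (z : ℂ) :
    HasDerivAt (fun w => heatTerm τ w n) (dzHT τ z n) z := by
  simp only [heatTerm_eq]
  apply HasDerivAt.fun_sum fun m _ => ?_
  have h := ((hasDerivAt_pow (n - 2 * m) z).const_mul (hC n m)).mul_const (τ ^ m)
  convert h using 1
  · rfl
  ring

lemma hasDerivAt_dzHT (τ : ℂ) (n : ℕ) (z : ℂ) :
    HasDerivAt (fun w => dzHT τ w n) (d2zHT τ z n) z := by
  simp only [dzHT]
  apply HasDerivAt.fun_sum fun m _ => ?_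
  have h := ((hasDerivAt_pow (n - 2 * m - 1) z).const_mul
      (hC n m * ((n - 2 * m : ℕ) : ℂ))).mul_const (τ ^ m)
  convert h using 1
  · rfl
  have : n - 2 * m - 2 = n - 2 * m - 1 - 1 := by omega
  rw [this]
  ring

lemma dtHT_eq (τ z : ℂ) (n : ℕ) : dtHT τ z n = -(1 / 2) * d2zHT τ z n := by
  rw [dtHT, d2zHT, Finset.sum_range_succ', Finset.sum_range_succ, mul_add]
  have h0 : hC n 0 * z ^ (n - 2 * 0) * ((0 : ℕ) * τ ^ (0 - 1)) = 0 := by simp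
  have hlast : (hC n (n / 2) * ((n - 2 * (n / 2) : ℕ) : ℂ) * ((n - 2 * (n / 2) - 1 : ℕ) : ℂ)) *
      z ^ (n - 2 * (n / 2) - 2) * τ ^ (n / 2) = 0 := by
    have h : n - 2 * (n / 2) = 0 ∨ n - 2 * (n / 2) = 1 := by omega
    rcases h with h | h <;> rw [h] <;> simp
  rw [h0, hlast, add_zero, mul_zero, add_zero, Finset.mul_sum]
  apply Finset.sum_congr rfl
  intro m hm
  rw [Finset.mem_range] at hm
  have h2 : 2 * (m + 1) ≤ n := by omega
  set j := n - 2 * m - 2 with hj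
  have e1 : n - 2 * (m + 1) = j := by omega
  have e2 : n - 2 * m = j + 2 := by omega
  have e3 : n - 2 * m - 1 = j + 1 := by omega
  have hm1 : m + 1 - 1 = m := by omega
  have key : hC n (m + 1) * ((m : ℂ) + 1) = -(1 / 2) * (hC n m * ((j : ℂ) + 2) * ((j : ℂ) + 1)) := by
    rw [hC, hC, e1, e2]
    have hf2 : ((j + 2).factorial) = (j + 2) * ((j + 1) * j.factorial) := by
      rw [Nat.factorial_succ, Nat.factorial_succ]
    rw [Nat.factorial_succ m, hf2]
    have hD1 : (((m + 1 : ℕ) : ℂ) * (m.factorial : ℂ) * 2 ^ (m + 1) * (j.factorial : ℂ)) ≠ 0 := by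
      refine mul_ne_zero (mul_ne_zero (mul_ne_zero ?_ ?_) ?_) ?_
      · exact Nat.cast_ne_zero.2 (Nat.succ_ne_zero m)
      · exact Nat.cast_ne_zero.2 m.factorial_ne_zero
      · exact pow_ne_zero _ two_ne_zero
      · exact Nat.cast_ne_zero.2 j.factorial_ne_zero
    have hD2 : ((m.factorial : ℂ) * 2 ^ m *
        (((j + 2 : ℕ) : ℂ) * (((j + 1 : ℕ) : ℂ) * (j.factorial : ℂ)))) ≠ 0 := by
      refine mul_ne_zero (mul_ne_zero ?_ ?_) (mul_ne_zero ?_ (mul_ne_zero ?_ ?_))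
      · exact Nat.cast_ne_zero.2 m.factorial_ne_zero
      · exact pow_ne_zero _ two_ne_zero
      · exact Nat.cast_ne_zero.2 (by omega)
      · exact Nat.cast_ne_zero.2 (Nat.succ_ne_zero j)
      · exact Nat.cast_ne_zero.2 j.factorial_ne_zero
    push_cast at hD1 hD2 ⊢
    rw [div_mul_eq_mul_div, div_mul_eq_mul_div, div_mul_eq_mul_div, mul_div_assoc']
    rw [div_eq_div_iff hD1 hD2]
    ring
  rw [e1, e3, e2, hm1]
  push_cast
  linear_combination (z ^ j * τ ^ m) * key

lemma pow_div_factorial_le_exp {x : ℝ} (hx : 0 ≤ x) (k : ℕ) :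
    x ^ k / k.factorial ≤ Real.exp x := by
  calc x ^ k / k.factorial ≤ ∑ i ∈ Finset.range (k + 1), x ^ i / i.factorial := by
        exact Finset.single_le_sum (f := fun i => x ^ i / (i.factorial : ℝ))
          (fun i _ => by positivity) (Finset.self_mem_range_succ k)
    _ ≤ Real.exp x := Real.sum_le_exp_of_nonneg hx _

lemma abs_hC (n m : ℕ) :
    ‖hC n m‖ =
      (n.factorial : ℝ) / (m.factorial * 2 ^ m * (n - 2 * m).factorial) := by
  rw [hC]
  rw [norm_div, norm_mul, norm_mul, norm_mul, norm_pow, norm_pow]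
  simp

lemma heatTerm_norm_le (τ z : ℂ) (n : ℕ) {σ : ℝ} (hσ : 0 < σ) :
    ‖heatTerm τ z n‖ ≤ (n.factorial : ℝ) / σ ^ n * Real.exp (‖z‖ * σ) *
      Real.exp (‖τ‖ * σ ^ 2 / 2) := by
  rw [heatTerm_eq]
  calc ‖∑ m ∈ Finset.range (n / 2 + 1), hC n m * z ^ (n - 2 * m) * τ ^ m‖
      ≤ ∑ m ∈ Finset.range (n / 2 + 1), ‖hC n m * z ^ (n - 2 * m) * τ ^ m‖ :=
        norm_sum_le _ _
    _ ≤ ∑ m ∈ Finset.range (n / 2 + 1),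
        (n.factorial : ℝ) / σ ^ n * Real.exp (‖z‖ * σ) *
          ((‖τ‖ * σ ^ 2 / 2) ^ m / m.factorial) := by
        apply Finset.sum_le_sum
        intro m hm
        rw [Finset.mem_range] at hm
        have h2m : 2 * m ≤ n := by omega
        set k := n - 2 * m with hk
        have hkn : k + 2 * m = n := by omega
        rw [norm_mul, norm_mul]
        rw [abs_hC,
          norm_pow, norm_pow]
        have hz1 : ‖z‖ ^ k ≤ Real.exp (‖z‖ * σ) * k.factorial / σ ^ k := by
          have h := pow_div_factorial_le_exp (x := ‖z‖ * σ) (by positivity) k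
          rw [mul_pow, div_le_iff₀ (by positivity : (0:ℝ) < (k.factorial : ℝ))] at h
          rw [le_div_iff₀ (by positivity : (0:ℝ) < σ ^ k)]
          calc ‖z‖ ^ k * σ ^ k ≤ Real.exp (‖z‖ * σ) * k.factorial := h
            _ = Real.exp (‖z‖ * σ) * k.factorial := rfl
        calc (n.factorial : ℝ) / (m.factorial * 2 ^ m * k.factorial) *
              ‖z‖ ^ k * ‖τ‖ ^ m
            ≤ (n.factorial : ℝ) / (m.factorial * 2 ^ m * k.factorial) *
              (Real.exp (‖z‖ * σ) * k.factorial / σ ^ k) * ‖τ‖ ^ m := by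
              gcongr
          _ = (n.factorial : ℝ) / σ ^ n * Real.exp (‖z‖ * σ) *
              ((‖τ‖ * σ ^ 2 / 2) ^ m / m.factorial) := by
              rw [← hkn, pow_add, pow_mul, div_pow, mul_pow]
              have hkf : (0:ℝ) < (k.factorial : ℝ) := by positivity
              have hmf : (0:ℝ) < (m.factorial : ℝ) := by positivity
              field_simp
    _ = (n.factorial : ℝ) / σ ^ n * Real.exp (‖z‖ * σ) *
        ∑ m ∈ Finset.range (n / 2 + 1), (‖τ‖ * σ ^ 2 / 2) ^ m / m.factorial := by
        rw [Finset.mul_sum]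
    _ ≤ (n.factorial : ℝ) / σ ^ n * Real.exp (‖z‖ * σ) *
        Real.exp (‖τ‖ * σ ^ 2 / 2) := by
        apply mul_le_mul_of_nonneg_left _ (by positivity)
        exact Real.sum_le_exp_of_nonneg (by positivity) _

lemma factorial_le_stirling {n : ℕ} (hn : 1 ≤ n) :
    (n.factorial : ℝ) ≤ Real.exp 1 * n * (n / Real.exp 1) ^ n := by
  obtain ⟨k, rfl⟩ := Nat.exists_eq_add_of_le hn
  have h1 : Stirling.stirlingSeq (1 + k) ≤ Stirling.stirlingSeq 1 := by
    have := Stirling.stirlingSeq'_antitone (Nat.zero_le k)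
    simpa [Function.comp, Nat.succ_eq_add_one, add_comm 1 k] using this
  rw [Stirling.stirlingSeq_one] at h1
  rw [Stirling.stirlingSeq] at h1
  set n := 1 + k
  have hnpos : (0 : ℝ) < n := by positivity
  have hd : (0 : ℝ) < Real.sqrt (2 * n) * (n / Real.exp 1) ^ n := by positivity
  rw [div_le_div_iff₀ hd (by positivity : (0:ℝ) < Real.sqrt 2)] at h1
  have hsq : Real.sqrt (2 * (n : ℝ)) = Real.sqrt 2 * Real.sqrt n := Real.sqrt_mul (by norm_num) _
  rw [hsq] at h1
  have h2 : (n.factorial : ℝ) * Real.sqrt 2 ≤ Real.sqrt 2 * (Real.exp 1 * Real.sqrt n * (n / Real.exp 1) ^ n) := by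
    calc (n.factorial : ℝ) * Real.sqrt 2 ≤ Real.exp 1 * (Real.sqrt 2 * Real.sqrt n * (n / Real.exp 1) ^ n) := h1
      _ = Real.sqrt 2 * (Real.exp 1 * Real.sqrt n * (n / Real.exp 1) ^ n) := by ring
  have h3 : (n.factorial : ℝ) ≤ Real.exp 1 * Real.sqrt n * (n / Real.exp 1) ^ n := by
    have hs2 : (0 : ℝ) < Real.sqrt 2 := by positivity
    have := (mul_le_mul_iff_right₀ hs2).1 (by linarith [h2] : Real.sqrt 2 * (n.factorial : ℝ) ≤ Real.sqrt 2 * (Real.exp 1 * Real.sqrt n * (n / Real.exp 1) ^ n))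
    exact this
  have hsn : Real.sqrt n ≤ n := by
    nlinarith [Real.sq_sqrt hnpos.le, Real.sqrt_nonneg (n : ℝ),
      (by exact_mod_cast hn : (1 : ℝ) ≤ (n : ℝ))]
  calc (n.factorial : ℝ) ≤ Real.exp 1 * Real.sqrt n * (n / Real.exp 1) ^ n := h3
    _ ≤ Real.exp 1 * n * (n / Real.exp 1) ^ n := by
      gcongr

lemma sqrt_le_add_div {x s : ℝ} (hx : 0 ≤ x) (hs : 0 < s) :
    Real.sqrt x ≤ s + x / s := by
  rcases le_or_gt (Real.sqrt x) s with h | h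
  · have : 0 ≤ x / s := by positivity
    linarith
  · have h2 : Real.sqrt x * Real.sqrt x = x := Real.mul_self_sqrt hx
    have h3 : Real.sqrt x ≤ x / s := by
      rw [le_div_iff₀ hs]
      nlinarith [Real.sqrt_nonneg x]
    linarith

lemma aux_summable {q c : ℝ} (hq0 : 0 < q) (hq1 : q < 1) (hc : 0 ≤ c) :
    Summable (fun n : ℕ => (n : ℝ) * q ^ n * Real.exp (c * Real.sqrt n)) := by
  rcases eq_or_lt_of_le hc with rfl | hcpos
  · simp only [zero_mul, Real.exp_zero, mul_one]
    have h := summable_pow_mul_geometric_of_norm_lt_one 1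
      (by rwa [Real.norm_of_nonneg hq0.le] : ‖q‖ < 1)
    simpa using h
  · set a := Real.log q⁻¹ with ha
    have haq : Real.exp a = q⁻¹ := Real.exp_log (by positivity)
    have hapos : 0 < a := Real.log_pos (by rw [one_lt_inv_iff₀]; exact ⟨hq0, hq1⟩)
    set s := 2 * c / a with hs
    have hspos : 0 < s := by positivity
    have hsqq : 0 < Real.sqrt q := Real.sqrt_pos.2 hq0
    have hexp_half : Real.exp (a / 2) = (Real.sqrt q)⁻¹ := by
      rw [← Real.sqrt_inv, ← haq]
      rw [show Real.exp a = Real.exp (a / 2) ^ 2 by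
        rw [← Real.exp_nat_mul]; norm_num; ring_nf]
      rw [Real.sqrt_sq (Real.exp_pos _).le]
    have hkey : q * Real.exp (a / 2) = Real.sqrt q := by
      rw [hexp_half, mul_inv_eq_iff_eq_mul₀ hsqq.ne']
      exact (Real.mul_self_sqrt hq0.le).symm
    have hsq1 : Real.sqrt q < 1 := by
      rw [show (1:ℝ) = Real.sqrt 1 by simp]
      exact Real.sqrt_lt_sqrt hq0.le hq1
    have hbound : ∀ n : ℕ, (n : ℝ) * q ^ n * Real.exp (c * Real.sqrt n) ≤
        Real.exp (c * s) * ((n : ℝ) * Real.sqrt q ^ n) := by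
      intro n
      have h1 : Real.sqrt n ≤ s + n / s := sqrt_le_add_div (Nat.cast_nonneg n) hspos
      have h2 : c * Real.sqrt n ≤ c * s + (a / 2) * n := by
        have : c * (n / s) = (a / 2) * n := by
          rw [hs]; field_simp
        nlinarith
      have h3 : Real.exp (c * Real.sqrt n) ≤ Real.exp (c * s) * Real.exp (a / 2) ^ n := by
        rw [← Real.exp_nat_mul, ← Real.exp_add]
        apply Real.exp_le_exp.2
        calc c * Real.sqrt n ≤ c * s + (a / 2) * n := h2
          _ = c * s + n * (a / 2) := by ring
      calc (n : ℝ) * q ^ n * Real.exp (c * Real.sqrt n)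
          ≤ (n : ℝ) * q ^ n * (Real.exp (c * s) * Real.exp (a / 2) ^ n) := by
            apply mul_le_mul_of_nonneg_left h3 (by positivity)
        _ = Real.exp (c * s) * ((n : ℝ) * (q * Real.exp (a / 2)) ^ n) := by
            rw [mul_pow]; ring
        _ = Real.exp (c * s) * ((n : ℝ) * Real.sqrt q ^ n) := by rw [hkey]
    apply Summable.of_nonneg_of_le (fun n => by positivity) hbound
    have h := summable_pow_mul_geometric_of_norm_lt_one 1
      (by rwa [Real.norm_of_nonneg hsqq.le] : ‖Real.sqrt q‖ < 1)
    simpa using h.mul_left (Real.exp (c * s))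

set_option maxHeartbeats 1000000 in
lemma summable_bound (a : ℕ → ℂ) {r δ : ℝ} (hr : 0 < r) (hδ : 0 < δ)
    (hrδ : r * δ ^ 2 < Real.exp 1) {ρ : ℝ} (hρ : 0 ≤ ρ) {n₀ : ℕ}
    (ha : ∀ n, n₀ ≤ n → ‖a n‖ ≤ (δ / Real.sqrt n) ^ n) :
    Summable (fun n : ℕ => ‖a n‖ *
      ((n.factorial : ℝ) / Real.sqrt ((n + 1) / r) ^ n *
        Real.exp (ρ * Real.sqrt ((n + 1) / r)) *
        Real.exp (r * Real.sqrt ((n + 1) / r) ^ 2 / 2))) := by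
  have hEE : Real.exp (1 / 2) * Real.exp (1 / 2) = Real.exp 1 := by
    rw [← Real.exp_add]; norm_num
  have hEpos : 0 < Real.exp (1 / 2) := Real.exp_pos _
  set q : ℝ := Real.sqrt (r * δ ^ 2) / Real.sqrt (Real.exp 1) with hqdef
  have hq0 : 0 < q :=
    div_pos (Real.sqrt_pos.2 (by positivity)) (Real.sqrt_pos.2 (Real.exp_pos 1))
  have hq1 : q < 1 := by
    rw [hqdef, div_lt_one (Real.sqrt_pos.2 (Real.exp_pos 1))]
    exact Real.sqrt_lt_sqrt (by positivity) hrδ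
  have hqe : δ * Real.sqrt r / Real.exp 1 * Real.exp (1 / 2) = q := by
    have h1 : Real.sqrt (r * δ ^ 2) = δ * Real.sqrt r := by
      rw [Real.sqrt_mul hr.le, Real.sqrt_sq hδ.le]; ring
    have h2 : Real.sqrt (Real.exp 1) = Real.exp (1 / 2) := by
      rw [show Real.exp 1 = Real.exp (1 / 2) ^ 2 by rw [sq]; exact hEE.symm,
        Real.sqrt_sq (Real.exp_pos _).le]
    rw [hqdef, h1, h2, ← hEE]
    field_simp
  set c : ℝ := ρ * Real.sqrt (2 / r) with hcdef
  have hc : 0 ≤ c := by positivity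
  set N := max n₀ 1 with hN
  set u : ℕ → ℝ := fun n => ‖a n‖ *
      ((n.factorial : ℝ) / Real.sqrt ((n + 1) / r) ^ n *
        Real.exp (ρ * Real.sqrt ((n + 1) / r)) *
        Real.exp (r * Real.sqrt ((n + 1) / r) ^ 2 / 2)) with hu
  have key : ∀ n, N ≤ n → u n ≤
      (Real.exp 1 * Real.exp (1 / 2)) * ((n : ℝ) * q ^ n * Real.exp (c * Real.sqrt n)) := by
    intro n hn
    have hn1 : 1 ≤ n := le_trans (le_max_right _ _) hn
    have hn0 : n₀ ≤ n := le_trans (le_max_left _ _) hn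
    have hnpos : (0 : ℝ) < n := by exact_mod_cast hn1
    set σ : ℝ := Real.sqrt (((n : ℝ) + 1) / r) with hσdef
    have hσpos : 0 < σ := Real.sqrt_pos.2 (by positivity)
    have hA : Real.exp (r * σ ^ 2 / 2) = Real.exp (1 / 2) * Real.exp (1 / 2) ^ n := by
      rw [hσdef, Real.sq_sqrt (by positivity)]
      rw [show r * (((n : ℝ) + 1) / r) / 2 = (n : ℝ) * (1 / 2) + 1 / 2 by field_simp]
      rw [Real.exp_add, Real.exp_nat_mul]
      ring
    have hB : Real.exp (ρ * σ) ≤ Real.exp (c * Real.sqrt n) := by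
      apply Real.exp_le_exp.2
      rw [hcdef, mul_assoc]
      apply mul_le_mul_of_nonneg_left _ hρ
      calc σ ≤ Real.sqrt (2 * (n : ℝ) / r) := by
            apply Real.sqrt_le_sqrt
            gcongr
            have h1n : (1 : ℝ) ≤ (n : ℝ) := by exact_mod_cast hn1
            linarith
        _ = Real.sqrt (2 / r) * Real.sqrt n := by
            rw [← Real.sqrt_mul (by positivity)]
            congr 1
            field_simp
    have hσn : Real.sqrt ((n : ℝ) / r) ≤ σ := by
      apply Real.sqrt_le_sqrt
      gcongr
      have h1n : (1 : ℝ) ≤ (n : ℝ) := by exact_mod_cast hn1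
      linarith
    have hσn_pos : 0 < Real.sqrt ((n : ℝ) / r) := Real.sqrt_pos.2 (by positivity)
    have hsdiv : Real.sqrt ((n : ℝ) / r) = Real.sqrt n / Real.sqrt r :=
      Real.sqrt_div (Nat.cast_nonneg n) r
    have hscal : (δ / Real.sqrt n) / (Real.sqrt n / Real.sqrt r) = δ * Real.sqrt r / n := by
      have hss : Real.sqrt n * Real.sqrt n = (n : ℝ) := Real.mul_self_sqrt hnpos.le
      have hsn : (0:ℝ) < Real.sqrt n := Real.sqrt_pos.2 hnpos
      have hsr : (0:ℝ) < Real.sqrt r := Real.sqrt_pos.2 hr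
      field_simp
      rw [Real.sq_sqrt hnpos.le]
    have hCD : ‖a n‖ * ((n.factorial : ℝ) / σ ^ n) ≤
        Real.exp 1 * n * (δ * Real.sqrt r / Real.exp 1) ^ n := by
      calc ‖a n‖ * ((n.factorial : ℝ) / σ ^ n)
          ≤ (δ / Real.sqrt n) ^ n * ((n.factorial : ℝ) / Real.sqrt ((n : ℝ) / r) ^ n) := by
            apply mul_le_mul (ha n hn0) ?_ (by positivity) (by positivity)
            apply div_le_div_of_nonneg_left (by positivity) (by positivity)
            exact pow_le_pow_left₀ hσn_pos.le hσn n
        _ = (n.factorial : ℝ) * ((δ / Real.sqrt n) / (Real.sqrt n / Real.sqrt r)) ^ n := by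
            rw [hsdiv, div_pow ((δ / Real.sqrt n)) ((Real.sqrt n / Real.sqrt r))]
            ring
        _ = (n.factorial : ℝ) * (δ * Real.sqrt r / n) ^ n := by rw [hscal]
        _ ≤ (Real.exp 1 * n * ((n : ℝ) / Real.exp 1) ^ n) * (δ * Real.sqrt r / n) ^ n := by
            apply mul_le_mul_of_nonneg_right (factorial_le_stirling hn1) (by positivity)
        _ = Real.exp 1 * n * (((n : ℝ) / Real.exp 1) * (δ * Real.sqrt r / n)) ^ n := by
            rw [mul_pow]; ring
        _ = Real.exp 1 * n * (δ * Real.sqrt r / Real.exp 1) ^ n := by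
            congr 2
            field_simp
    have hqn : (δ * Real.sqrt r / Real.exp 1) ^ n * Real.exp (1 / 2) ^ n = q ^ n := by
      rw [← mul_pow, hqe]
    calc u n = (‖a n‖ * ((n.factorial : ℝ) / σ ^ n)) * Real.exp (ρ * σ) *
          Real.exp (r * σ ^ 2 / 2) := by rw [hu]; ring
      _ ≤ (Real.exp 1 * n * (δ * Real.sqrt r / Real.exp 1) ^ n) * Real.exp (c * Real.sqrt n) *
          Real.exp (r * σ ^ 2 / 2) := by
            apply mul_le_mul_of_nonneg_right _ (Real.exp_pos _).le
            apply mul_le_mul hCD hB (Real.exp_pos _).le (by positivity)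
      _ = (Real.exp 1 * Real.exp (1 / 2)) * ((n : ℝ) *
          ((δ * Real.sqrt r / Real.exp 1) ^ n * Real.exp (1 / 2) ^ n) * Real.exp (c * Real.sqrt n)) := by
            rw [hA]; ring
      _ = (Real.exp 1 * Real.exp (1 / 2)) * ((n : ℝ) * q ^ n * Real.exp (c * Real.sqrt n)) := by
            rw [hqn]
  have hg : Summable (fun n : ℕ => (Real.exp 1 * Real.exp (1 / 2)) *
      ((n : ℝ) * q ^ n * Real.exp (c * Real.sqrt n))) :=
    (aux_summable hq0 hq1 hc).mul_left _
  have hunn : ∀ n, 0 ≤ u n := by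
    intro n
    apply mul_nonneg (norm_nonneg _)
    positivity
  apply (summable_nat_add_iff N).1
  apply Summable.of_nonneg_of_le (fun n => hunn _) (fun n => key (n + N) (by omega))
  exact (summable_nat_add_iff N).2 hg


set_option maxHeartbeats 1600000 in
/-- `F(z;τ) = (e^{-τD²/2}F)(z)` solves the backward heat equation
`∂F(z;τ)/∂τ = -(1/2) ∂²F(z;τ)/∂z²` on the domain `|τ| L² < e`. -/
theorem heat_flow_solves_backward_heat_equation (F : ℂ → ℂ) (hF : Differentiable ℂ F)
    (hL : Filter.IsBoundedUnder (· ≤ ·) Filter.atTop (coefGrowthSeq F)) :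
    ∀ τ z : ℂ, ‖τ‖ * Lgrowth F ^ 2 < Real.exp 1 →
      HasDerivAt (fun s => heatFlow F s z)
        (-(1 / 2) * iteratedDeriv 2 (fun w => heatFlow F τ w) z) τ := by
  intro τ z hτ
  have habs : ∀ w : ℂ, ‖w‖ = ‖w‖ := fun w => rfl
  have hseq_nonneg : ∀ n, 0 ≤ coefGrowthSeq F n := fun n =>
    mul_nonneg (Real.sqrt_nonneg _) (Real.rpow_nonneg (norm_nonneg _) _)
  have hL0 : 0 ≤ Lgrowth F :=
    Filter.le_limsup_of_frequently_le (Filter.Frequently.of_forall hseq_nonneg) hL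
  obtain ⟨ε, hεpos, hεlt⟩ :
      ∃ ε > (0:ℝ), (‖τ‖ + ε) * (Lgrowth F + ε) ^ 2 < Real.exp 1 := by
    have hcont : ContinuousAt (fun ε : ℝ => (‖τ‖ + ε) * (Lgrowth F + ε) ^ 2) 0 := by
      fun_prop
    have h0 : (‖τ‖ + 0) * (Lgrowth F + 0) ^ 2 < Real.exp 1 := by simpa using hτ
    have hev : ∀ᶠ ε in nhds (0:ℝ),
        (‖τ‖ + ε) * (Lgrowth F + ε) ^ 2 < Real.exp 1 :=
      hcont.eventually_lt_const h0
    have h2 := hev.filter_mono (nhdsWithin_le_nhds (s := Set.Ioi (0:ℝ)))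
    obtain ⟨ε, hlt, hmem⟩ := (h2.and self_mem_nhdsWithin).exists
    exact ⟨ε, hmem, hlt⟩
  set r : ℝ := ‖τ‖ + ε with hrdef
  set δ : ℝ := Lgrowth F + ε with hδdef
  have hr : 0 < r := add_pos_of_nonneg_of_pos (norm_nonneg τ) hεpos
  have hδ : 0 < δ := add_pos_of_nonneg_of_pos hL0 hεpos
  have hrδ : r * δ ^ 2 < Real.exp 1 := hεlt
  have hLδ : Lgrowth F < δ := lt_add_of_pos_right _ hεpos
  obtain ⟨n₀, hn₀⟩ := Filter.eventually_atTop.1 (Filter.eventually_lt_of_limsup_lt hLδ hL)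
  have hcoef : ∀ n, max n₀ 1 ≤ n →
      ‖taylorCoeff F n‖ ≤ (δ / Real.sqrt n) ^ n := by
    intro n hn
    have hn1 : 1 ≤ n := le_trans (le_max_right _ _) hn
    have h := (hn₀ n (le_trans (le_max_left _ _) hn)).le
    rw [coefGrowthSeq] at h
    have hnposR : (0:ℝ) < n := by exact_mod_cast hn1
    have hsn : (0:ℝ) < Real.sqrt n := Real.sqrt_pos.2 hnposR
    have h2 : ‖taylorCoeff F n‖ ^ ((n:ℝ)⁻¹) ≤ δ / Real.sqrt n := by
      rw [le_div_iff₀ hsn]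
      calc ‖taylorCoeff F n‖ ^ ((n:ℝ)⁻¹) * Real.sqrt n
          = Real.sqrt n * ‖taylorCoeff F n‖ ^ ((n:ℝ)⁻¹) := by ring
        _ ≤ δ := h
    have h3 : ‖taylorCoeff F n‖ =
        (‖taylorCoeff F n‖ ^ ((n:ℝ)⁻¹)) ^ n := by
      rw [← Real.rpow_natCast (‖taylorCoeff F n‖ ^ ((n:ℝ)⁻¹)) n,
        ← Real.rpow_mul (norm_nonneg _),
        inv_mul_cancel₀ (by exact_mod_cast hnposR.ne' : (n:ℝ) ≠ 0), Real.rpow_one]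
    rw [h3]
    exact pow_le_pow_left₀ (Real.rpow_nonneg (norm_nonneg _) _) h2 n
  have hσpos : ∀ n : ℕ, (0:ℝ) < Real.sqrt (((n:ℝ) + 1) / r) :=
    fun n => Real.sqrt_pos.2 (by positivity)
  -- part 1 : τ-derivative
  have hmem_τ : τ ∈ ball (0:ℂ) r := by
    rw [mem_ball_zero_iff, habs, hrdef]
    linarith
  have hu1 : Summable (fun n : ℕ => ‖taylorCoeff F n‖ *
      ((n.factorial : ℝ) / Real.sqrt ((n + 1) / r) ^ n *
        Real.exp (‖z‖ * Real.sqrt ((n + 1) / r)) *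
        Real.exp (r * Real.sqrt ((n + 1) / r) ^ 2 / 2))) :=
    summable_bound (taylorCoeff F) hr hδ hrδ (norm_nonneg z) hcoef
  have hb1 : ∀ (n : ℕ), ∀ s ∈ ball (0:ℂ) r,
      ‖taylorCoeff F n * heatTerm s z n‖ ≤ ‖taylorCoeff F n‖ *
      ((n.factorial : ℝ) / Real.sqrt ((n + 1) / r) ^ n *
        Real.exp (‖z‖ * Real.sqrt ((n + 1) / r)) *
        Real.exp (r * Real.sqrt ((n + 1) / r) ^ 2 / 2)) := by
    intro n s hs
    rw [norm_mul, habs]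
    apply mul_le_mul_of_nonneg_left _ (norm_nonneg _)
    refine (heatTerm_norm_le s z n (hσpos n)).trans ?_
    apply mul_le_mul_of_nonneg_left _ (by positivity)
    apply Real.exp_le_exp.2
    have hsr : ‖s‖ ≤ r := by
      rw [mem_ball_zero_iff, habs] at hs
      exact hs.le
    have hσ2 : (0:ℝ) ≤ Real.sqrt (((n:ℝ) + 1) / r) ^ 2 / 2 := by positivity
    calc ‖s‖ * Real.sqrt (((n:ℝ) + 1) / r) ^ 2 / 2
        = ‖s‖ * (Real.sqrt (((n:ℝ) + 1) / r) ^ 2 / 2) := by ring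
      _ ≤ r * (Real.sqrt (((n:ℝ) + 1) / r) ^ 2 / 2) := mul_le_mul_of_nonneg_right hsr hσ2
      _ = r * Real.sqrt (((n:ℝ) + 1) / r) ^ 2 / 2 := by ring
  have hTU1 : TendstoUniformlyOn
      (fun N s => ∑ n ∈ Finset.range N, taylorCoeff F n * heatTerm s z n)
      (fun s => heatFlow F s z) atTop (ball (0:ℂ) r) :=
    tendstoUniformlyOn_tsum_nat hu1 hb1
  have hP : ∀ (N : ℕ) (x : ℂ), HasDerivAt
      (fun s => ∑ n ∈ Finset.range N, taylorCoeff F n * heatTerm s z n)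
      (∑ n ∈ Finset.range N, taylorCoeff F n * dtHT x z n) x := fun N x =>
    HasDerivAt.fun_sum fun n _ => (hasDerivAt_heatTerm_tau z n x).const_mul (taylorCoeff F n)
  have hPdiff : ∀ N : ℕ, DifferentiableOn ℂ
      (fun s => ∑ n ∈ Finset.range N, taylorCoeff F n * heatTerm s z n) (ball (0:ℂ) r) :=
    fun N x _ => ((hP N x).differentiableAt).differentiableWithinAt
  have hTLU1 := hTU1.tendstoLocallyUniformlyOn
  have hd1 := hTLU1.deriv (Filter.Eventually.of_forall hPdiff) isOpen_ball
  have htend1 : Filter.Tendsto (fun N => ∑ n ∈ Finset.range N, taylorCoeff F n * dtHT τ z n)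
      atTop (nhds (deriv (fun s => heatFlow F s z) τ)) :=
    (hd1.tendsto_at hmem_τ).congr (fun N => (hP N τ).deriv)
  have hdiff1 : DifferentiableOn ℂ (fun s => heatFlow F s z) (ball (0:ℂ) r) :=
    hTLU1.differentiableOn (Filter.Eventually.of_forall hPdiff) isOpen_ball
  have hHD : HasDerivAt (fun s => heatFlow F s z) (deriv (fun s => heatFlow F s z) τ) τ :=
    (hdiff1.differentiableAt (isOpen_ball.mem_nhds hmem_τ)).hasDerivAt
  -- part 2 : z-derivatives
  set ρ2 : ℝ := ‖z‖ + 1 with hρ2def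
  have hmem_z : z ∈ ball (0:ℂ) ρ2 := by
    rw [mem_ball_zero_iff, habs, hρ2def]
    linarith
  have hu2 : Summable (fun n : ℕ => ‖taylorCoeff F n‖ *
      ((n.factorial : ℝ) / Real.sqrt ((n + 1) / r) ^ n *
        Real.exp (ρ2 * Real.sqrt ((n + 1) / r)) *
        Real.exp (r * Real.sqrt ((n + 1) / r) ^ 2 / 2))) :=
    summable_bound (taylorCoeff F) hr hδ hrδ (by positivity) hcoef
  have hb2 : ∀ (n : ℕ), ∀ w ∈ ball (0:ℂ) ρ2,
      ‖taylorCoeff F n * heatTerm τ w n‖ ≤ ‖taylorCoeff F n‖ *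
      ((n.factorial : ℝ) / Real.sqrt ((n + 1) / r) ^ n *
        Real.exp (ρ2 * Real.sqrt ((n + 1) / r)) *
        Real.exp (r * Real.sqrt ((n + 1) / r) ^ 2 / 2)) := by
    intro n w hw
    rw [norm_mul, habs]
    apply mul_le_mul_of_nonneg_left _ (norm_nonneg _)
    refine (heatTerm_norm_le τ w n (hσpos n)).trans ?_
    have hwρ : ‖w‖ ≤ ρ2 := by
      rw [mem_ball_zero_iff, habs] at hw
      exact hw.le
    have hτr : ‖τ‖ ≤ r := by
      rw [hrdef]; linarith
    have e1 : Real.exp (‖w‖ * Real.sqrt (((n:ℝ) + 1) / r)) ≤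
        Real.exp (ρ2 * Real.sqrt (((n:ℝ) + 1) / r)) :=
      Real.exp_le_exp.2 (mul_le_mul_of_nonneg_right hwρ (Real.sqrt_nonneg _))
    have e2 : Real.exp (‖τ‖ * Real.sqrt (((n:ℝ) + 1) / r) ^ 2 / 2) ≤
        Real.exp (r * Real.sqrt (((n:ℝ) + 1) / r) ^ 2 / 2) := by
      apply Real.exp_le_exp.2
      have hσ2 : (0:ℝ) ≤ Real.sqrt (((n:ℝ) + 1) / r) ^ 2 / 2 := by positivity
      calc ‖τ‖ * Real.sqrt (((n:ℝ) + 1) / r) ^ 2 / 2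
          = ‖τ‖ * (Real.sqrt (((n:ℝ) + 1) / r) ^ 2 / 2) := by ring
        _ ≤ r * (Real.sqrt (((n:ℝ) + 1) / r) ^ 2 / 2) := mul_le_mul_of_nonneg_right hτr hσ2
        _ = r * Real.sqrt (((n:ℝ) + 1) / r) ^ 2 / 2 := by ring
    apply mul_le_mul _ e2 (Real.exp_pos _).le (by positivity)
    exact mul_le_mul_of_nonneg_left e1 (by positivity)
  have hTU2 : TendstoUniformlyOn
      (fun N w => ∑ n ∈ Finset.range N, taylorCoeff F n * heatTerm τ w n)
      (fun w => heatFlow F τ w) atTop (ball (0:ℂ) ρ2) :=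
    tendstoUniformlyOn_tsum_nat hu2 hb2
  have hQ : ∀ (N : ℕ) (x : ℂ), HasDerivAt
      (fun w => ∑ n ∈ Finset.range N, taylorCoeff F n * heatTerm τ w n)
      (∑ n ∈ Finset.range N, taylorCoeff F n * dzHT τ x n) x := fun N x =>
    HasDerivAt.fun_sum fun n _ => (hasDerivAt_heatTerm_z τ n x).const_mul (taylorCoeff F n)
  have hQ2 : ∀ (N : ℕ) (x : ℂ), HasDerivAt
      (fun w => ∑ n ∈ Finset.range N, taylorCoeff F n * dzHT τ w n)
      (∑ n ∈ Finset.range N, taylorCoeff F n * d2zHT τ x n) x := fun N x =>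
    HasDerivAt.fun_sum fun n _ => (hasDerivAt_dzHT τ n x).const_mul (taylorCoeff F n)
  have hQderiv : ∀ N : ℕ,
      deriv (fun w => ∑ n ∈ Finset.range N, taylorCoeff F n * heatTerm τ w n) =
        fun w => ∑ n ∈ Finset.range N, taylorCoeff F n * dzHT τ w n :=
    fun N => funext fun x => (hQ N x).deriv
  have hQdiff : ∀ N : ℕ, DifferentiableOn ℂ
      (fun w => ∑ n ∈ Finset.range N, taylorCoeff F n * heatTerm τ w n) (ball (0:ℂ) ρ2) :=
    fun N x _ => ((hQ N x).differentiableAt).differentiableWithinAt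
  have hTLU2 := hTU2.tendstoLocallyUniformlyOn
  have hd2a := hTLU2.deriv (Filter.Eventually.of_forall hQdiff) isOpen_ball
  have hd2adiff : ∀ N : ℕ, DifferentiableOn ℂ
      ((deriv ∘ fun N w => ∑ n ∈ Finset.range N, taylorCoeff F n * heatTerm τ w n) N)
      (ball (0:ℂ) ρ2) := by
    intro N
    show DifferentiableOn ℂ
      (deriv (fun w => ∑ n ∈ Finset.range N, taylorCoeff F n * heatTerm τ w n)) (ball (0:ℂ) ρ2)
    rw [hQderiv N]
    exact fun x _ => ((hQ2 N x).differentiableAt).differentiableWithinAt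
  have hd2b := hd2a.deriv (Filter.Eventually.of_forall hd2adiff) isOpen_ball
  have htend2 : Filter.Tendsto (fun N => ∑ n ∈ Finset.range N, taylorCoeff F n * d2zHT τ z n)
      atTop (nhds (deriv (deriv (fun w => heatFlow F τ w)) z)) := by
    refine (hd2b.tendsto_at hmem_z).congr (fun N => ?_)
    show deriv (deriv (fun w => ∑ n ∈ Finset.range N, taylorCoeff F n * heatTerm τ w n)) z = _
    rw [hQderiv N]
    exact (hQ2 N z).deriv
  -- combine
  have hid : ∀ N : ℕ, ∑ n ∈ Finset.range N, taylorCoeff F n * dtHT τ z n =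
      -(1 / 2 : ℂ) * ∑ n ∈ Finset.range N, taylorCoeff F n * d2zHT τ z n := by
    intro N
    rw [Finset.mul_sum]
    apply Finset.sum_congr rfl
    intro n _
    rw [dtHT_eq]
    ring
  have htend1' : Filter.Tendsto (fun N => ∑ n ∈ Finset.range N, taylorCoeff F n * dtHT τ z n)
      atTop (nhds (-(1 / 2 : ℂ) * deriv (deriv (fun w => heatFlow F τ w)) z)) := by
    have h := htend2.const_mul (-(1 / 2 : ℂ))
    exact h.congr (fun N => (hid N).symm)
  have huniq : deriv (fun s => heatFlow F s z) τ =
      -(1 / 2 : ℂ) * deriv (deriv (fun w => heatFlow F τ w)) z :=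
    tendsto_nhds_unique htend1 htend1'
  have h2iter : iteratedDeriv 2 (fun w => heatFlow F τ w) z =
      deriv (deriv (fun w => heatFlow F τ w)) z := by
    rw [iteratedDeriv_succ, iteratedDeriv_one]
  rw [h2iter, ← huniq]
  exact hHD

end
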